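/- Let h_m, h_e, g_m, g_e, σ, P_s be positive reals with h_m > h_e, g_e > g_m, and σ²P_s h_m²h_e²(g_e² − g_m²) + σ⁴(g_e²h_e² − g_m²h_m²) > 0. Define R(P_j) = log₂(1 + P_s h_m²/(σ² + P_j g_m²)) − log₂(1 + P_s h_e²/(σ² + P_j g_e²)). Then there exists a unique P_j° > 0 such that R is strictly increasing on [0, P_j°] and strictly decreasing on [P_j°, ∞); in particular R attains its maximum over [0,∞) uniquely at P_j°. -/

import Mathlib

set_option maxHeartbeats 1000000

private lemma quad_prod (c2 c1 c0 s : ℝ) (hc2 : c2 ≠ 0) (hs : s ^ 2 = c1 ^ 2 - 4 * c2 * c0) :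
    c2 * ((-c1 + s) / (2 * c2) * ((-c1 - s) / (2 * c2))) = c0 := by
  field_simp
  linear_combination (-1 : ℝ) * hs

private lemma quad_fac (c2 c1 c0 s : ℝ) (hc2 : c2 ≠ 0) (hs : s ^ 2 = c1 ^ 2 - 4 * c2 * c0)
    (p : ℝ) :
    c2 * p ^ 2 + c1 * p + c0 =
      c2 * (p - (-c1 + s) / (2 * c2)) * (p - (-c1 - s) / (2 * c2)) := by
  field_simp
  linear_combination hs

theorem secure_rate_unique_max
    (hm he gm ge σ Ps : ℝ)
    (hhm : 0 < hm) (hhe : 0 < he) (hgm : 0 < gm) (hge : 0 < ge)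
    (hσ : 0 < σ) (hPs : 0 < Ps)
    (hmain : hm > he) (hg : ge > gm)
    (hz : 0 < σ ^ 2 * Ps * hm ^ 2 * he ^ 2 * (ge ^ 2 - gm ^ 2) +
        σ ^ 4 * (ge ^ 2 * he ^ 2 - gm ^ 2 * hm ^ 2)) :
    ∃! Pjo : ℝ, 0 < Pjo ∧
      StrictMonoOn (fun p : ℝ =>
          Real.logb 2 (1 + Ps * hm ^ 2 / (σ ^ 2 + p * gm ^ 2)) -
            Real.logb 2 (1 + Ps * he ^ 2 / (σ ^ 2 + p * ge ^ 2)))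
        (Set.Icc 0 Pjo) ∧
      StrictAntiOn (fun p : ℝ =>
          Real.logb 2 (1 + Ps * hm ^ 2 / (σ ^ 2 + p * gm ^ 2)) -
            Real.logb 2 (1 + Ps * he ^ 2 / (σ ^ 2 + p * ge ^ 2)))
        (Set.Ici Pjo) ∧
      ∀ p ∈ Set.Ici (0 : ℝ), p ≠ Pjo →
        Real.logb 2 (1 + Ps * hm ^ 2 / (σ ^ 2 + p * gm ^ 2)) -
            Real.logb 2 (1 + Ps * he ^ 2 / (σ ^ 2 + p * ge ^ 2)) <
          Real.logb 2 (1 + Ps * hm ^ 2 / (σ ^ 2 + Pjo * gm ^ 2)) -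
            Real.logb 2 (1 + Ps * he ^ 2 / (σ ^ 2 + Pjo * ge ^ 2)) := by
  set f : ℝ → ℝ := fun p =>
      Real.logb 2 (1 + Ps * hm ^ 2 / (σ ^ 2 + p * gm ^ 2)) -
        Real.logb 2 (1 + Ps * he ^ 2 / (σ ^ 2 + p * ge ^ 2)) with hfdef
  have hs : (0:ℝ) < σ ^ 2 := by positivity
  have hα : (0:ℝ) < Ps * hm ^ 2 := by positivity
  have hβ : (0:ℝ) < Ps * he ^ 2 := by positivity
  set c2 : ℝ := gm ^ 2 * ge ^ 2 * (gm ^ 2 * (Ps * he ^ 2) - ge ^ 2 * (Ps * hm ^ 2)) with hc2def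
  set c1 : ℝ := 2 * gm ^ 2 * ge ^ 2 * σ ^ 2 * (Ps * he ^ 2 - Ps * hm ^ 2) with hc1def
  set c0 : ℝ := σ ^ 2 * (σ ^ 2 * (ge ^ 2 * (Ps * he ^ 2) - gm ^ 2 * (Ps * hm ^ 2)) +
      (Ps * hm ^ 2) * (Ps * he ^ 2) * (ge ^ 2 - gm ^ 2)) with hc0def
  have hgsq : gm ^ 2 < ge ^ 2 := by nlinarith
  have hhsq : he ^ 2 < hm ^ 2 := by nlinarith
  have hcross : gm ^ 2 * (Ps * he ^ 2) < ge ^ 2 * (Ps * hm ^ 2) := by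
    have t1 := mul_lt_mul_of_pos_right hgsq hβ
    have t2 : ge ^ 2 * (Ps * he ^ 2) < ge ^ 2 * (Ps * hm ^ 2) := by
      apply mul_lt_mul_of_pos_left _ (by positivity : (0:ℝ) < ge ^ 2)
      exact mul_lt_mul_of_pos_left hhsq hPs
    linarith
  have hc2 : c2 < 0 := by
    rw [hc2def]
    apply mul_neg_of_pos_of_neg (by positivity)
    linarith
  have hc0 : 0 < c0 := by
    have h : c0 = Ps * (σ ^ 2 * Ps * hm ^ 2 * he ^ 2 * (ge ^ 2 - gm ^ 2) +
        σ ^ 4 * (ge ^ 2 * he ^ 2 - gm ^ 2 * hm ^ 2)) := by rw [hc0def]; ring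
    rw [h]; exact mul_pos hPs hz
  set Δ : ℝ := c1 ^ 2 - 4 * c2 * c0 with hΔdef
  have hΔpos : 0 < Δ := by
    rw [hΔdef]
    nlinarith [sq_nonneg c1, mul_neg_of_neg_of_pos hc2 hc0]
  have hsq0 : Real.sqrt Δ ^ 2 = Δ := Real.sq_sqrt hΔpos.le
  have hsq : Real.sqrt Δ ^ 2 = c1 ^ 2 - 4 * c2 * c0 := by rw [hsq0, hΔdef]
  have hc1ltΔ : c1 ^ 2 < Δ := by
    rw [hΔdef]; nlinarith [mul_neg_of_neg_of_pos hc2 hc0]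
  have hgt1 : c1 < Real.sqrt Δ := Real.lt_sqrt_of_sq_lt hc1ltΔ
  have hgt2 : -c1 < Real.sqrt Δ := Real.lt_sqrt_of_sq_lt (by nlinarith [hc1ltΔ])
  set r1 : ℝ := (-c1 + Real.sqrt Δ) / (2 * c2) with hr1def
  set Pjo : ℝ := (-c1 - Real.sqrt Δ) / (2 * c2) with hPjodef
  have hc2ne : c2 ≠ 0 := ne_of_lt hc2
  have hPjopos : 0 < Pjo :=
    div_pos_of_neg_of_neg (by linarith) (by linarith)
  have hprod : c2 * (r1 * Pjo) = c0 := by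
    rw [hr1def, hPjodef]
    exact quad_prod c2 c1 c0 (Real.sqrt Δ) hc2ne hsq
  have hr1neg : r1 < 0 := by
    by_contra h
    push_neg at h
    have h2 : 0 ≤ r1 * Pjo := mul_nonneg h hPjopos.le
    nlinarith [hprod]
  have hfac : ∀ p : ℝ, c2 * p ^ 2 + c1 * p + c0 = c2 * (p - r1) * (p - Pjo) := by
    intro p
    rw [hr1def, hPjodef]
    exact quad_fac c2 c1 c0 (Real.sqrt Δ) hc2ne hsq p
  have hQpos : ∀ p : ℝ, 0 ≤ p → p < Pjo → 0 < c2 * p ^ 2 + c1 * p + c0 := by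
    intro p hp hplt
    rw [hfac]
    have h1 : 0 < p - r1 := by linarith
    have h2 : p - Pjo < 0 := by linarith
    exact mul_pos_of_neg_of_neg (mul_neg_of_neg_of_pos hc2 h1) h2
  have hQneg : ∀ p : ℝ, Pjo < p → c2 * p ^ 2 + c1 * p + c0 < 0 := by
    intro p hplt
    rw [hfac]
    have h1 : 0 < p - r1 := by linarith
    have h2 : 0 < p - Pjo := by linarith
    exact mul_neg_of_neg_of_pos (mul_neg_of_neg_of_pos hc2 h1) h2
  have hlog2 : (0:ℝ) < Real.log 2 := Real.log_pos (by norm_num)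
  have hderiv : ∀ p : ℝ, 0 ≤ p →
      HasDerivAt f ((c2 * p ^ 2 + c1 * p + c0) /
        ((σ ^ 2 + p * gm ^ 2) * (σ ^ 2 + p * gm ^ 2 + Ps * hm ^ 2) *
         (σ ^ 2 + p * ge ^ 2) * (σ ^ 2 + p * ge ^ 2 + Ps * he ^ 2) * Real.log 2)) p := by
    intro p hp
    have hX : (0:ℝ) < σ ^ 2 + p * gm ^ 2 := by positivity
    have hY : (0:ℝ) < σ ^ 2 + p * ge ^ 2 := by positivity
    have hXα : (0:ℝ) < σ ^ 2 + p * gm ^ 2 + Ps * hm ^ 2 := by positivity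
    have hYβ : (0:ℝ) < σ ^ 2 + p * ge ^ 2 + Ps * he ^ 2 := by positivity
    have h1pos : (0:ℝ) < 1 + Ps * hm ^ 2 / (σ ^ 2 + p * gm ^ 2) := by positivity
    have h2pos : (0:ℝ) < 1 + Ps * he ^ 2 / (σ ^ 2 + p * ge ^ 2) := by positivity
    have hXd : HasDerivAt (fun q : ℝ => σ ^ 2 + q * gm ^ 2) (gm ^ 2) p := by
      simpa using ((hasDerivAt_id p).mul_const (gm ^ 2)).const_add (σ ^ 2)
    have hYd : HasDerivAt (fun q : ℝ => σ ^ 2 + q * ge ^ 2) (ge ^ 2) p := by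
      simpa using ((hasDerivAt_id p).mul_const (ge ^ 2)).const_add (σ ^ 2)
    have hA : HasDerivAt (fun q : ℝ => 1 + Ps * hm ^ 2 / (σ ^ 2 + q * gm ^ 2))
        ((0 * (σ ^ 2 + p * gm ^ 2) - Ps * hm ^ 2 * gm ^ 2) / (σ ^ 2 + p * gm ^ 2) ^ 2) p :=
      (((hasDerivAt_const p (Ps * hm ^ 2)).div hXd hX.ne').const_add 1)
    have hB : HasDerivAt (fun q : ℝ => 1 + Ps * he ^ 2 / (σ ^ 2 + q * ge ^ 2))
        ((0 * (σ ^ 2 + p * ge ^ 2) - Ps * he ^ 2 * ge ^ 2) / (σ ^ 2 + p * ge ^ 2) ^ 2) p :=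
      (((hasDerivAt_const p (Ps * he ^ 2)).div hYd hY.ne').const_add 1)
    have hAl := (hA.log h1pos.ne').div_const (Real.log 2)
    have hBl := (hB.log h2pos.ne').div_const (Real.log 2)
    have hsub := hAl.sub hBl
    have heq : f = fun p : ℝ =>
        Real.log (1 + Ps * hm ^ 2 / (σ ^ 2 + p * gm ^ 2)) / Real.log 2 -
          Real.log (1 + Ps * he ^ 2 / (σ ^ 2 + p * ge ^ 2)) / Real.log 2 := by
      funext q; simp [hfdef, Real.logb]
    rw [heq]
    refine HasDerivAt.congr_deriv hsub ?_
    rw [hc2def, hc1def, hc0def]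
    field_simp
    ring
  have hcont : ∀ p : ℝ, 0 ≤ p → ContinuousAt f p := fun p hp => (hderiv p hp).continuousAt
  have hdval : ∀ p : ℝ, 0 ≤ p → deriv f p = (c2 * p ^ 2 + c1 * p + c0) /
        ((σ ^ 2 + p * gm ^ 2) * (σ ^ 2 + p * gm ^ 2 + Ps * hm ^ 2) *
         (σ ^ 2 + p * ge ^ 2) * (σ ^ 2 + p * ge ^ 2 + Ps * he ^ 2) * Real.log 2) :=
    fun p hp => (hderiv p hp).deriv
  have hden : ∀ p : ℝ, 0 ≤ p → 0 < (σ ^ 2 + p * gm ^ 2) * (σ ^ 2 + p * gm ^ 2 + Ps * hm ^ 2) *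
      (σ ^ 2 + p * ge ^ 2) * (σ ^ 2 + p * ge ^ 2 + Ps * he ^ 2) * Real.log 2 := by
    intro p hp
    have h1 : (0:ℝ) < σ ^ 2 + p * gm ^ 2 := by positivity
    have h2 : (0:ℝ) < σ ^ 2 + p * gm ^ 2 + Ps * hm ^ 2 := by positivity
    have h3 : (0:ℝ) < σ ^ 2 + p * ge ^ 2 := by positivity
    have h4 : (0:ℝ) < σ ^ 2 + p * ge ^ 2 + Ps * he ^ 2 := by positivity
    positivity
  have hmono : StrictMonoOn f (Set.Icc 0 Pjo) := by
    apply strictMonoOn_of_deriv_pos (convex_Icc 0 Pjo)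
    · intro p hp; exact (hcont p hp.1).continuousWithinAt
    · intro p hp
      rw [interior_Icc] at hp
      rw [hdval p hp.1.le]
      exact div_pos (hQpos p hp.1.le hp.2) (hden p hp.1.le)
  have hanti : StrictAntiOn f (Set.Ici Pjo) := by
    apply strictAntiOn_of_deriv_neg (convex_Ici Pjo)
    · intro p hp; exact (hcont p (le_trans hPjopos.le hp)).continuousWithinAt
    · intro p hp
      rw [interior_Ici] at hp
      have hp0 : (0:ℝ) ≤ p := le_of_lt (lt_trans hPjopos hp)
      rw [hdval p hp0]
      exact div_neg_of_neg_of_pos (hQneg p hp) (hden p hp0)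
  have hmax : ∀ p ∈ Set.Ici (0:ℝ), p ≠ Pjo → f p < f Pjo := by
    intro p hp hne
    rcases lt_or_gt_of_ne hne with h | h
    · exact hmono ⟨hp, h.le⟩ ⟨hPjopos.le, le_refl _⟩ h
    · exact hanti (Set.mem_Ici.mpr (le_refl Pjo)) h.le h
  refine ⟨Pjo, ⟨hPjopos, hmono, hanti, hmax⟩, ?_⟩
  rintro P' ⟨hPpos, -, -, hmax'⟩
  by_contra hne
  have h1 := hmax P' hPpos.le hne
  have h2 : f Pjo < f P' := hmax' Pjo hPjopos.le (fun h => hne h.symm)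
  linarith
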